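/- Let u_n = Σ_{k=0}^n C(n,k)^2·C(2k,n)^2. Then for all integers n ≥ 2, u_{2n} ≡ u_n (mod 8). -/

import Mathlib

/-- The Apéry-like sequence (ε) of the first kind. -/
def aperyLikeEpsilon (n : ℕ) : ℤ :=
  ∑ k ∈ Finset.range (n + 1), (n.choose k : ℤ) ^ 2 * ((2 * k).choose n : ℤ) ^ 2

open Nat Finset

private lemma two_bits_of_not_pow {k : ℕ} (hk : k ≠ 0) (hpow : ¬ ∃ m, k = 2 ^ m) :
    ∃ i j, i < j ∧ k.testBit i = true ∧ k.testBit j = true := by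
  obtain ⟨j, hj, hjmax⟩ := Nat.exists_most_significant_bit hk
  by_contra h
  push_neg at h
  apply hpow
  refine ⟨j, Nat.eq_of_testBit_eq fun i => ?_⟩
  rcases lt_trichotomy i j with hij | rfl | hij
  · have h1 : k.testBit i = false := by
      rcases Bool.eq_false_or_eq_true (k.testBit i) with hb | hb
      · exact absurd hj (h i j hij hb)
      · exact hb
    rw [h1, Nat.testBit_two_pow_of_ne (Ne.symm hij.ne)]
  · rw [hj, Nat.testBit_two_pow_self]
  · rw [hjmax i hij, Nat.testBit_two_pow_of_ne hij.ne]

private lemma mem_carry {k t : ℕ} (hbt : k.testBit t = true) :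
    t + 1 ∈ {i ∈ Ico 1 (Nat.log 2 (2 * k) + 1) |
      2 ^ i ≤ k % 2 ^ i + (2 * k - k) % 2 ^ i} := by
  have hk2 : 2 ^ t ≤ k := Nat.ge_two_pow_of_testBit hbt
  have hk0 : 2 * k ≠ 0 := by
    have : 0 < 2 ^ t := pow_pos (by norm_num) t
    omega
  have hmod : (2:ℕ) ^ t ≤ k % 2 ^ (t + 1) := by
    apply Nat.ge_two_pow_of_testBit
    simp [Nat.testBit_mod_two_pow, hbt]
  have hlog : t + 1 ≤ Nat.log 2 (2 * k) := by
    rw [Nat.le_log_iff_pow_le (by norm_num) hk0]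
    calc (2:ℕ) ^ (t + 1) = 2 * 2 ^ t := by ring
    _ ≤ 2 * k := by omega
  simp only [Finset.mem_filter, Finset.mem_Ico]
  refine ⟨⟨by omega, by omega⟩, ?_⟩
  have h2 : 2 * k - k = k := by omega
  rw [h2]
  have : (2:ℕ) ^ (t + 1) = 2 ^ t + 2 ^ t := by ring
  omega

private lemma four_dvd_central {k : ℕ} (hk : k ≠ 0) (hpow : ¬ ∃ m, k = 2 ^ m) :
    4 ∣ (2 * k).choose k := by
  obtain ⟨i, j, hij, hbi, hbj⟩ := two_bits_of_not_pow hk hpow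
  have hmul := Nat.Prime.emultiplicity_choose (p := 2) (n := 2 * k) (k := k)
    (b := Nat.log 2 (2 * k) + 1) Nat.prime_two (by omega) (by omega)
  have hsub : ({i + 1, j + 1} : Finset ℕ) ⊆
      {i ∈ Ico 1 (Nat.log 2 (2 * k) + 1) | 2 ^ i ≤ k % 2 ^ i + (2 * k - k) % 2 ^ i} := by
    intro x hx
    rcases Finset.mem_insert.mp hx with rfl | hx
    · exact mem_carry hbi
    · rw [Finset.mem_singleton] at hx
      subst hx
      exact mem_carry hbj
  have hcard : 2 ≤ #{i ∈ Ico 1 (Nat.log 2 (2 * k) + 1) |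
      2 ^ i ≤ k % 2 ^ i + (2 * k - k) % 2 ^ i} := by
    have := Finset.card_le_card hsub
    rwa [Finset.card_insert_of_notMem (by simp; omega), Finset.card_singleton] at this
  have : (4 : ℕ) = 2 ^ 2 := by norm_num
  rw [this]
  apply pow_dvd_of_le_emultiplicity
  rw [hmul]
  exact_mod_cast hcard

private lemma central_pow_two (m : ℕ) :
    ∃ c, Odd c ∧ (2 * 2 ^ m).choose (2 ^ m) = 2 * c := by
  have hpow : (2:ℕ) * 2 ^ m = 2 ^ (m + 1) := by ring
  have hkn : (2:ℕ) ^ m ≤ 2 ^ (m + 1) := Nat.pow_le_pow_right (by norm_num) (by omega)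
  have hk0 : (2:ℕ) ^ m ≠ 0 := (pow_pos (by norm_num) m).ne'
  have hmul := Nat.Prime.emultiplicity_choose_prime_pow Nat.prime_two hkn hk0
  have hm : multiplicity 2 (2 ^ m) = m :=
    multiplicity_eq_of_emultiplicity_eq_some (Nat.Prime.emultiplicity_pow_self Nat.prime_two)
  rw [hm] at hmul
  have h1 : m + 1 - m = 1 := by omega
  rw [h1, emultiplicity_eq_coe] at hmul
  obtain ⟨⟨c, hc⟩, hnd⟩ := hmul
  rw [pow_one] at hc
  refine ⟨c, ?_, by rw [hpow, hc]⟩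
  rcases Nat.even_or_odd c with ⟨d, hd⟩ | ho
  · exfalso
    exact hnd ⟨d, by rw [hc, hd]; ring⟩
  · exact ho

private lemma main_div {n k : ℕ} (hn : 1 ≤ n) (hk : k ≤ n)
    (hexc : ¬ ∃ m, k = 2 ^ m ∧ (n = k ∨ n = 2 * k)) :
    4 ∣ n.choose k * (2 * k).choose n := by
  by_cases h2k : 2 * k < n
  · rw [Nat.choose_eq_zero_of_lt h2k]
    simp
  push_neg at h2k
  have hk0 : k ≠ 0 := by omega
  have hid : n.choose k * (2 * k).choose n = (2 * k).choose k * k.choose (n - k) := by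
    have h := Nat.choose_mul (n := 2 * k) (k := n) (s := k) hk
    have h2 : 2 * k - k = k := by omega
    rw [h2] at h
    rw [mul_comm, h]
  rw [hid]
  by_cases hpow : ∃ m, k = 2 ^ m
  · obtain ⟨m, rfl⟩ := hpow
    push_neg at hexc
    have hne := hexc m rfl
    have hs1 : n - 2 ^ m ≠ 0 := by omega
    have hs2 : n - 2 ^ m ≠ 2 ^ m := by omega
    have d2 : 2 ∣ (2 ^ m).choose (n - 2 ^ m) :=
      Nat.Prime.dvd_choose_pow Nat.prime_two hs1 hs2
    obtain ⟨c, _, hc⟩ := central_pow_two m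
    have d1 : 2 ∣ (2 * 2 ^ m).choose (2 ^ m) := ⟨c, hc⟩
    have : (4:ℕ) = 2 * 2 := by norm_num
    rw [this]
    exact mul_dvd_mul d1 d2
  · exact Dvd.dvd.mul_right (four_dvd_central hk0 hpow) _
private lemma key (n : ℕ) (hn : 2 ≤ n) : (8:ℤ) ∣ aperyLikeEpsilon n := by
  have hterm : ∀ k, (n.choose k : ℤ) ^ 2 * ((2 * k).choose n : ℤ) ^ 2
      = ((n.choose k * (2 * k).choose n : ℕ) : ℤ) ^ 2 := by
    intro k; push_cast; ring
  unfold aperyLikeEpsilon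
  by_cases hpow : ∃ a, n = 2 ^ a
  · obtain ⟨a, rfl⟩ := hpow
    obtain ⟨b, rfl⟩ : ∃ b, a = b + 1 := by
      cases a with
      | zero => norm_num at hn
      | succ b => exact ⟨b, rfl⟩
    have hlt : (2:ℕ) ^ b < 2 ^ (b + 1) := Nat.pow_lt_pow_right one_lt_two (lt_add_one b)
    have hne : (2:ℕ) ^ b ≠ 2 ^ (b + 1) := hlt.ne
    have hsub : ({2 ^ b, 2 ^ (b + 1)} : Finset ℕ) ⊆ Finset.range (2 ^ (b + 1) + 1) := by
      intro x hx
      rcases Finset.mem_insert.mp hx with rfl | hx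
      · exact Finset.mem_range.mpr (by omega)
      · rw [Finset.mem_singleton] at hx
        subst hx
        exact Finset.mem_range.mpr (by omega)
    rw [← Finset.sum_sdiff hsub]
    apply dvd_add
    · apply Finset.dvd_sum
      intro k hk
      obtain ⟨hkr, hks⟩ := Finset.mem_sdiff.mp hk
      rw [hterm k]
      have hkle : k ≤ 2 ^ (b + 1) := by
        have := Finset.mem_range.mp hkr; omega
      have hexc : ¬ ∃ m, k = 2 ^ m ∧ (2 ^ (b + 1) = k ∨ 2 ^ (b + 1) = 2 * k) := by
        rintro ⟨m, rfl, h | h⟩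
        · have hmb : m = b + 1 := Nat.pow_right_injective le_rfl h.symm
          subst hmb
          exact hks (by simp)
        · have h2 : (2:ℕ) ^ (b + 1) = 2 ^ (m + 1) := by rw [h]; ring
          have hmb : m + 1 = b + 1 := (Nat.pow_right_injective le_rfl h2).symm
          have : m = b := by omega
          subst this
          exact hks (by simp)
      obtain ⟨c, hc⟩ := main_div (by omega) hkle hexc
      rw [hc]
      push_cast
      exact ⟨2 * c ^ 2, by ring⟩
    · rw [Finset.sum_pair hne]
      obtain ⟨c, hcodd, hc⟩ := central_pow_two b
      obtain ⟨d, hdodd, hd⟩ := central_pow_two (b + 1)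
      have e1 : (2 ^ (b + 1)).choose (2 ^ b) = 2 * c := by
        rw [← hc]; congr 1; ring
      have e2 : (2 * 2 ^ b).choose (2 ^ (b + 1)) = 1 := by
        rw [show (2:ℕ) * 2 ^ b = 2 ^ (b + 1) by ring, Nat.choose_self]
      have e3 : (2 ^ (b + 1)).choose (2 ^ (b + 1)) = 1 := Nat.choose_self _
      rw [e1, e2, e3, hd]
      obtain ⟨x, hx⟩ := hcodd
      obtain ⟨y, hy⟩ := hdodd
      subst hx hy
      push_cast
      exact ⟨2 * x ^ 2 + 2 * x + 2 * y ^ 2 + 2 * y + 1, by ring⟩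
  · apply Finset.dvd_sum
    intro k hkmem
    rw [hterm k]
    have hk : k ≤ n := by
      have := Finset.mem_range.mp hkmem; omega
    have hexc : ¬ ∃ m, k = 2 ^ m ∧ (n = k ∨ n = 2 * k) := by
      rintro ⟨m, rfl, h | h⟩
      · exact hpow ⟨m, h⟩
      · exact hpow ⟨m + 1, by rw [h]; ring⟩
    obtain ⟨c, hc⟩ := main_div (by omega) hk hexc
    rw [hc]
    push_cast
    exact ⟨2 * c ^ 2, by ring⟩

/-- For all `n ≥ 2`, the sequence (ε) satisfies `u_{2n} ≡ uₙ (mod 8)`. -/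
theorem aperyLikeEpsilon_two_mul_modEq (n : ℕ) (hn : 2 ≤ n) :
    aperyLikeEpsilon (2 * n) ≡ aperyLikeEpsilon n [ZMOD 8] := by
  have h1 := key (2 * n) (by omega)
  have h2 := key n hn
  exact (Int.modEq_zero_iff_dvd.mpr h1).trans (Int.modEq_zero_iff_dvd.mpr h2).symm
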